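/- Let H = ⨁_{ℓ²} H_i and A an operator with bounded blocks A_ij whose norm matrix (‖A_ij‖) defines an operator α on ℓ². If α is compact and every block A_ij is a compact operator, then A is a compact operator on H. -/

import Mathlib

open scoped ENNReal RealInnerProductSpace
open Filter Topology

namespace Stmt1Aux

variable {𝕜 : Type*} [NontriviallyNormedField 𝕜] {E F : ℕ → Type*}
  [∀ i, NormedAddCommGroup (E i)] [∀ i, NormedSpace 𝕜 (E i)]
  [∀ i, NormedAddCommGroup (F i)]

lemma two_toReal_pos : 0 < (2 : ℝ≥0∞).toReal := by norm_num

/-- Coordinate evaluation as a continuous linear map. -/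
noncomputable def evalCLM (𝕜) [NontriviallyNormedField 𝕜] [∀ i, NormedSpace 𝕜 (E i)] (i : ℕ) :
    lp E 2 →L[𝕜] E i :=
  LinearMap.mkContinuous
    { toFun := fun f => f i
      map_add' := fun f g => by simp [lp.coeFn_add]
      map_smul' := fun c f => by simp [lp.coeFn_smul] }
    1 (fun f => by
      show ‖f i‖ ≤ 1 * ‖f‖
      simpa using lp.norm_apply_le_norm (by norm_num : (2 : ℝ≥0∞) ≠ 0) f i)

@[simp] lemma evalCLM_apply (i : ℕ) (f : lp E 2) : evalCLM 𝕜 i f = f i := rfl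

lemma single_add (i : ℕ) (a b : E i) :
    lp.single 2 i (a + b) = lp.single 2 i a + lp.single 2 i b := by
  apply lp.ext
  funext j
  rcases eq_or_ne j i with rfl | h
  · simp [lp.single_apply_self, lp.coeFn_add]
  · simp [lp.single_apply_ne _ _ _ h, lp.coeFn_add]

lemma norm_single' (i : ℕ) (a : E i) : ‖lp.single 2 i a‖ = ‖a‖ := by
  have := lp.norm_single (E := E) (by norm_num : (0:ℝ≥0∞) < 2) i a
  simpa using this

/-- `lp.single` as a continuous linear map. -/
noncomputable def singleCLM (𝕜) [NontriviallyNormedField 𝕜] [∀ i, NormedSpace 𝕜 (E i)] (i : ℕ) :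
    E i →L[𝕜] lp E 2 :=
  LinearMap.mkContinuous
    { toFun := fun a => lp.single 2 i a
      map_add' := fun a b => single_add i a b
      map_smul' := fun c a => by simp }
    1 (fun a => by simp [norm_single'])

@[simp] lemma singleCLM_apply (i : ℕ) (a : E i) : singleCLM 𝕜 i a = lp.single 2 i a := rfl

/-- Truncation to the first `N` coordinates. -/
noncomputable def proj (𝕜) [NontriviallyNormedField 𝕜] [∀ i, NormedSpace 𝕜 (E i)] (N : ℕ) :
    lp E 2 →L[𝕜] lp E 2 :=
  ∑ j ∈ Finset.range N, (singleCLM 𝕜 j).comp (evalCLM 𝕜 j)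

lemma proj_eq_sum (N : ℕ) (f : lp E 2) :
    proj 𝕜 N f = ∑ j ∈ Finset.range N, lp.single 2 j (f j) := by
  simp [proj, ContinuousLinearMap.sum_apply]

lemma proj_apply (N : ℕ) (f : lp E 2) (i : ℕ) :
    proj 𝕜 N f i = if i < N then f i else 0 := by
  rw [proj_eq_sum]
  simp only [lp.coeFn_sum, Finset.sum_apply, lp.single_apply, Finset.sum_dite_eq,
    Finset.sum_pi_single, Finset.mem_range]

lemma proj_tendsto (f : lp E 2) : Tendsto (fun N => proj 𝕜 N f) atTop (𝓝 f) := by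
  have h := (lp.hasSum_single (E := E) (by norm_num : (2:ℝ≥0∞) ≠ ⊤) f).tendsto_sum_nat
  refine h.congr fun N => (proj_eq_sum N f).symm

/-- If coordinatewise norms are dominated, so is the `ℓ²` norm (across two families). -/
lemma norm_le_norm_of_forall (f : lp E 2) (g : lp F 2) (h : ∀ i, ‖f i‖ ≤ ‖g i‖) :
    ‖f‖ ≤ ‖g‖ := by
  have hp : 0 < (2 : ℝ≥0∞).toReal := by norm_num
  rw [lp.norm_eq_tsum_rpow hp f, lp.norm_eq_tsum_rpow hp g]
  have hsf : Summable fun i => ‖f i‖ ^ (2 : ℝ≥0∞).toReal := (lp.hasSum_norm hp f).summable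
  have hsg : Summable fun i => ‖g i‖ ^ (2 : ℝ≥0∞).toReal := (lp.hasSum_norm hp g).summable
  have hts : (∑' i, ‖f i‖ ^ (2 : ℝ≥0∞).toReal) ≤ ∑' i, ‖g i‖ ^ (2 : ℝ≥0∞).toReal := by
    refine Summable.tsum_le_tsum (fun i => ?_) hsf hsg
    exact Real.rpow_le_rpow (norm_nonneg _) (h i) hp.le
  exact Real.rpow_le_rpow (tsum_nonneg fun i => Real.rpow_nonneg (norm_nonneg _) _) hts
    (by positivity)

lemma norm_sub_proj_le (N : ℕ) (u : lp E 2) : ‖u - proj 𝕜 N u‖ ≤ ‖u‖ := by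
  refine norm_le_norm_of_forall (u - proj 𝕜 N u) u fun i => ?_
  simp only [lp.coeFn_sub, Pi.sub_apply, proj_apply]
  split_ifs <;> simp

lemma tendsto_norm_sub_proj (u : lp E 2) :
    Tendsto (fun N => ‖u - proj 𝕜 N u‖) atTop (𝓝 0) := by
  have h' : Tendsto (fun N => u - proj 𝕜 N u) atTop (𝓝 (u - u)) :=
    tendsto_const_nhds.sub (proj_tendsto u)
  rw [sub_self] at h'
  have h2 := h'.norm
  rwa [norm_zero] at h2

variable [∀ i, NormedSpace 𝕜 (F i)]

/-- Entry formula: `(T x) i` is the sum of `T (single j (x j)) i`. -/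
lemma hasSum_apply (T : lp E 2 →L[𝕜] lp F 2) (x : lp E 2) (i : ℕ) :
    HasSum (fun j => T (lp.single 2 j (x j)) i) (T x i) := by
  have h1 : HasSum (fun j : ℕ => lp.single 2 j (x j)) x :=
    lp.hasSum_single (by norm_num : (2:ℝ≥0∞) ≠ ⊤) x
  exact (h1.mapL T).mapL (evalCLM 𝕜 i)

lemma isCompactOperator_finset_sum {X Y : Type*} [NormedAddCommGroup X] [NormedAddCommGroup Y]
    [NormedSpace 𝕜 X] [NormedSpace 𝕜 Y] {ι : Type*} (s : Finset ι) (T : ι → X →L[𝕜] Y)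
    (h : ∀ j ∈ s, IsCompactOperator (T j)) :
    IsCompactOperator (∑ j ∈ s, T j) := by
  classical
  induction s using Finset.induction_on with
  | empty => simpa using isCompactOperator_zero
  | @insert a s ha ih =>
    rw [Finset.sum_insert ha]
    have h1 := h a (Finset.mem_insert_self a s)
    have h2 := ih fun j hj => h j (Finset.mem_insert_of_mem hj)
    have := h1.add h2
    exact this

end Stmt1Aux

open Stmt1Aux

set_option maxHeartbeats 1000000 in
/-- If `A` is an operator on the ℓ²-direct sum `lp H 2` with bounded
blocks `B i j : H j →L H i`, the matrix of block norms gives a *compact* operator `α`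
on `ℓ²(ℕ, ℝ)`, and every block `B i j` is compact, then `A` is compact. -/
theorem stmt1
    (H : ℕ → Type) [∀ i, NormedAddCommGroup (H i)] [∀ i, InnerProductSpace ℂ (H i)]
    [∀ i, CompleteSpace (H i)]
    (B : ∀ i j : ℕ, H j →L[ℂ] H i)
    (A : lp H 2 →L[ℂ] lp H 2)
    (hA : ∀ (j : ℕ) (v : H j) (i : ℕ), A (lp.single 2 j v) i = B i j v)
    (α : lp (fun _ : ℕ => ℝ) 2 →L[ℝ] lp (fun _ : ℕ => ℝ) 2)
    (hα : ∀ i j : ℕ, α (lp.single 2 j (1 : ℝ)) i = ‖B i j‖)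
    (hαc : IsCompactOperator α)
    (hB : ∀ i j : ℕ, IsCompactOperator (B i j)) :
    IsCompactOperator A := by
  classical
  have hp2 : (0:ℝ) < (2 : ℝ≥0∞).toReal := by norm_num
  -- the sequence of coordinatewise norms, as an element of real ℓ²
  let y : lp H 2 → lp (fun _ : ℕ => ℝ) 2 := fun x =>
    ⟨fun j => ‖x j‖, memℓp_gen (by simpa using (lp.memℓp x).summable hp2)⟩
  have hy_apply : ∀ (x : lp H 2) (j : ℕ), y x j = ‖x j‖ := fun x j => rfl
  have hy_norm : ∀ x : lp H 2, ‖y x‖ = ‖x‖ := fun x =>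
    le_antisymm (norm_le_norm_of_forall _ _ fun i => by simp [hy_apply])
      (norm_le_norm_of_forall _ _ fun i => by simp [hy_apply])
  -- entries of α
  have hEntry : ∀ (z : lp (fun _ : ℕ => ℝ) 2) (i : ℕ),
      HasSum (fun j => ‖B i j‖ * z j) (α z i) := by
    intro z i
    have h := hasSum_apply α z i
    have e : ∀ j, α (lp.single 2 j (z j)) i = ‖B i j‖ * z j := by
      intro j
      have hs : lp.single (E := fun _ : ℕ => ℝ) 2 j (z j) = z j • lp.single 2 j (1:ℝ) := by
        rw [← lp.single_smul, smul_eq_mul, mul_one]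
      rw [hs, map_smul]
      simp [lp.coeFn_smul, hα, mul_comm]
    simpa only [e] using h
  have hαy_nonneg : ∀ (x : lp H 2) (i : ℕ), 0 ≤ α (y x) i := by
    intro x i
    have h := hEntry (y x) i
    rw [← h.tsum_eq]
    exact tsum_nonneg fun j => mul_nonneg (norm_nonneg _)
      (by rw [hy_apply]; exact norm_nonneg _)
  -- coordinates of truncated tails
  have hz_apply : ∀ (x : lp H 2) (M j : ℕ),
      (y x - proj ℝ M (y x)) j = if j < M then 0 else ‖x j‖ := by
    intro x M j
    simp only [lp.coeFn_sub, Pi.sub_apply, proj_apply, hy_apply]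
    split_ifs <;> simp
  -- the key coordinatewise bound
  have keyBound : ∀ (x : lp H 2) (M i : ℕ),
      ‖A x i - ∑ j ∈ Finset.range M, B i j (x j)‖ ≤ α (y x - proj ℝ M (y x)) i := by
    intro x M i
    set z := y x - proj ℝ M (y x) with hzdef
    have hαz : HasSum (fun j => if j < M then 0 else ‖B i j‖ * ‖x j‖) (α z i) := by
      have h := hEntry z i
      have e : ∀ j, ‖B i j‖ * z j = if j < M then 0 else ‖B i j‖ * ‖x j‖ := by
        intro j; rw [hzdef, hz_apply]; split_ifs <;> simp
      simpa only [e] using h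
    have hAx : HasSum (fun j => B i j (x j)) (A x i) := by
      have h := hasSum_apply A x i
      simpa only [hA] using h
    have hfin : HasSum (fun j => if j < M then B i j (x j) else 0)
        (∑ j ∈ Finset.range M, B i j (x j)) := by
      have h0 : ∀ j ∉ Finset.range M, (if j < M then B i j (x j) else 0) = 0 := by
        intro j hj; rw [Finset.mem_range] at hj; simp [hj]
      have h : HasSum _ _ := hasSum_sum_of_ne_finset_zero h0
      rwa [Finset.sum_congr rfl fun j hj => if_pos (Finset.mem_range.mp hj)] at h
    have hD : HasSum (fun j => if j < M then 0 else B i j (x j))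
        (A x i - ∑ j ∈ Finset.range M, B i j (x j)) := by
      have h := hAx.sub hfin
      have e : ∀ j, B i j (x j) - (if j < M then B i j (x j) else 0)
          = if j < M then 0 else B i j (x j) := by intro j; split_ifs <;> simp
      simpa only [e] using h
    have hbnd : ∀ j, ‖(if j < M then 0 else B i j (x j))‖
        ≤ (if j < M then 0 else ‖B i j‖ * ‖x j‖) := by
      intro j; split_ifs
      · simp
      · exact (B i j).le_opNorm _
    have hsum2 : Summable (fun j => if j < M then 0 else ‖B i j‖ * ‖x j‖) := hαz.summable
    have hsn : Summable (fun j => ‖(if j < M then 0 else B i j (x j))‖) :=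
      Summable.of_nonneg_of_le (fun j => norm_nonneg _) hbnd hsum2
    calc ‖A x i - ∑ j ∈ Finset.range M, B i j (x j)‖
        = ‖∑' j, (if j < M then 0 else B i j (x j))‖ := by rw [hD.tsum_eq]
      _ ≤ ∑' j, ‖(if j < M then 0 else B i j (x j))‖ := norm_tsum_le_tsum_norm hsn
      _ ≤ ∑' j, (if j < M then 0 else ‖B i j‖ * ‖x j‖) := Summable.tsum_le_tsum hbnd hsn hsum2
      _ = α z i := hαz.tsum_eq
  -- the main coordinatewise bound
  have hMain : ∀ (x : lp H 2) (i : ℕ), ‖A x i‖ ≤ α (y x) i := by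
    intro x i
    have h := keyBound x 0 i
    have hp0 : proj (E := fun _ : ℕ => ℝ) ℝ 0 = 0 := by simp [proj]
    rw [hp0] at h
    simpa using h
  -- row operators are compact
  have hRow : ∀ i : ℕ, IsCompactOperator ((evalCLM ℂ i).comp A) := by
    intro i
    set w := ContinuousLinearMap.adjoint α (lp.single 2 i (1 : ℝ)) with hw
    set S : ℕ → (lp H 2 →L[ℂ] H i) :=
      fun M => ∑ j ∈ Finset.range M, (B i j).comp (evalCLM ℂ j) with hS
    have hinner : ∀ (x : lp H 2) (M : ℕ),
        α (y x - proj ℝ M (y x)) i ≤ ‖w - proj ℝ M w‖ * ‖x‖ := by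
      intro x M
      set z := y x - proj ℝ M (y x) with hzdef
      have h1 : α z i = ⟪α z, lp.single 2 i (1:ℝ)⟫ := by
        rw [lp.inner_single_right]
        simp [RCLike.inner_apply]
      have h2 : ⟪α z, lp.single 2 i (1:ℝ)⟫ = ⟪z, w⟫ := by
        rw [hw, ContinuousLinearMap.adjoint_inner_right]
      have h3 : ⟪z, proj ℝ M w⟫ = 0 := by
        rw [lp.inner_eq_tsum]
        have e : ∀ j, ⟪z j, (proj ℝ M w) j⟫ = 0 := by
          intro j
          rw [proj_apply]
          by_cases hj : j < M
          · have hzj : z j = 0 := by rw [hzdef, hz_apply, if_pos hj]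
            rw [if_pos hj, hzj]; simp
          · rw [if_neg hj]; simp
        rw [tsum_congr e]; exact tsum_zero
      have h4 : ⟪z, w⟫ = ⟪z, w - proj ℝ M w⟫ := by
        rw [inner_sub_right, h3, sub_zero]
      have hzx : ‖z‖ ≤ ‖x‖ := by
        refine le_trans (norm_le_norm_of_forall z (y x) fun j => ?_) (le_of_eq (hy_norm x))
        rw [hzdef, hz_apply, hy_apply]
        split_ifs <;> simp
      calc α z i = ⟪z, w - proj ℝ M w⟫ := by rw [h1, h2, h4]
        _ ≤ ‖z‖ * ‖w - proj ℝ M w‖ := real_inner_le_norm _ _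
        _ ≤ ‖x‖ * ‖w - proj ℝ M w‖ :=
            mul_le_mul_of_nonneg_right hzx (norm_nonneg _)
        _ = ‖w - proj ℝ M w‖ * ‖x‖ := mul_comm _ _
    have hSval : ∀ (M : ℕ) (x : lp H 2), S M x = ∑ j ∈ Finset.range M, B i j (x j) := by
      intro M x
      simp [hS, ContinuousLinearMap.sum_apply]
    have hdiff : ∀ M, ‖(evalCLM ℂ i).comp A - S M‖ ≤ ‖w - proj ℝ M w‖ := by
      intro M
      refine ContinuousLinearMap.opNorm_le_bound _ (norm_nonneg _) fun x => ?_
      have e : ((evalCLM ℂ i).comp A - S M) x = A x i - ∑ j ∈ Finset.range M, B i j (x j) := by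
        rw [ContinuousLinearMap.sub_apply, hSval]
        rfl
      rw [e]
      exact (keyBound x M i).trans (hinner x M)
    have hw0 : Tendsto (fun M => ‖w - proj ℝ M w‖) atTop (𝓝 0) :=
      tendsto_norm_sub_proj w
    have hTend : Tendsto S atTop (𝓝 ((evalCLM ℂ i).comp A)) := by
      refine (tendsto_iff_norm_sub_tendsto_zero (f := S) (a := atTop) (b := (evalCLM ℂ i).comp A)).mpr ?_
      refine squeeze_zero (fun M => norm_nonneg (S M - (evalCLM ℂ i).comp A)) (fun M => ?_) hw0
      rw [norm_sub_rev (S M)]; exact hdiff M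
    refine isCompactOperator_of_tendsto hTend (Eventually.of_forall fun M => ?_)
    rw [hS, ContinuousLinearMap.coe_sum']
    refine isCompactOperator_finset_sum _ _ fun j _ => ?_
    have h := (hB i j).comp_clm (evalCLM ℂ j)
    rwa [← ContinuousLinearMap.coe_comp'] at h
  -- the truncated operators are compact
  have hTN : ∀ N : ℕ, IsCompactOperator ((proj ℂ N).comp A) := by
    intro N
    have e : (proj ℂ N).comp A
        = ∑ i ∈ Finset.range N, (singleCLM ℂ i).comp ((evalCLM ℂ i).comp A) := by
      refine ContinuousLinearMap.ext fun x => ?_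
      simp [proj_eq_sum, ContinuousLinearMap.sum_apply]
    rw [e, ContinuousLinearMap.coe_sum']
    refine isCompactOperator_finset_sum _ _ fun i _ => ?_
    have h := (hRow i).clm_comp (singleCLM ℂ i)
    rwa [← ContinuousLinearMap.coe_comp'] at h
  -- uniform smallness of tails of α, from compactness
  have hαtail : ∀ ε > (0:ℝ), ∃ N₀ : ℕ, ∀ N ≥ N₀, ∀ f : lp (fun _ : ℕ => ℝ) 2,
      ‖α f - proj ℝ N (α f)‖ ≤ ε * ‖f‖ := by
    intro ε hε
    have hαc' : IsCompactOperator
        (α : lp (fun _ : ℕ => ℝ) 2 →ₗ[ℝ] lp (fun _ : ℕ => ℝ) 2) := by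
      simpa using hαc
    obtain ⟨K, hK, hKsub⟩ := hαc'.image_closedBall_subset_compact 1
    obtain ⟨t, htfin, hcover⟩ :=
      (Metric.totallyBounded_iff).mp hK.totallyBounded (ε/3) (by linarith)
    have hev : ∀ᶠ N in (atTop : Filter ℕ), ∀ v ∈ t, ‖v - proj ℝ N v‖ ≤ ε/3 := by
      refine htfin.eventually_all.mpr fun v _ => ?_
      have h : Tendsto (fun N => ‖v - proj ℝ N v‖) atTop (𝓝 0) :=
        tendsto_norm_sub_proj v
      exact (h.eventually (gt_mem_nhds (by linarith : (0:ℝ) < ε/3))).mono fun N hN => hN.le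
    obtain ⟨N₀, hN₀⟩ := eventually_atTop.mp hev
    refine ⟨N₀, fun N hN f => ?_⟩
    rcases eq_or_ne f 0 with rfl | hf0
    · simp
    · have hne : ‖f‖ ≠ 0 := norm_ne_zero_iff.mpr hf0
      set g := ‖f‖⁻¹ • f with hg
      have hgball : g ∈ Metric.closedBall (0 : lp (fun _ : ℕ => ℝ) 2) 1 := by
        rw [Metric.mem_closedBall, dist_zero_right, hg, norm_smul, norm_inv, norm_norm,
          inv_mul_cancel₀ hne]
      have hginK : α g ∈ K := hKsub ⟨g, hgball, rfl⟩
      obtain ⟨v, hvt, hgv⟩ : ∃ v ∈ t, α g ∈ Metric.ball v (ε/3) := by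
        have h := hcover hginK
        simpa using h
      have hb : ‖α g - proj ℝ N (α g)‖ ≤ ε := by
        have e1 : α g - proj ℝ N (α g)
            = (α g - v - proj ℝ N (α g - v)) + (v - proj ℝ N v) := by
          rw [map_sub]; abel
        rw [e1]
        refine (norm_add_le _ _).trans ?_
        have h1 : ‖α g - v - proj ℝ N (α g - v)‖ ≤ ‖α g - v‖ := norm_sub_proj_le N _
        have h2 := hN₀ N hN v hvt
        have h3 : ‖α g - v‖ < ε/3 := by
          rw [Metric.mem_ball, dist_eq_norm] at hgv
          exact hgv
        linarith
      have hαf : ‖f‖ • α g = α f := by rw [hg, map_smul, smul_inv_smul₀ hne]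
      have hpf : ‖f‖ • proj ℝ N (α g) = proj ℝ N (α f) := by rw [← map_smul, hαf]
      have e2 : α f - proj ℝ N (α f) = ‖f‖ • (α g - proj ℝ N (α g)) := by
        rw [smul_sub, hαf, hpf]
      rw [e2, norm_smul, norm_norm, mul_comm]
      exact mul_le_mul_of_nonneg_right hb (norm_nonneg f)
  -- convergence of the truncations of A
  have hTendA : Tendsto (fun N => (proj ℂ N).comp A) atTop (𝓝 A) := by
    rw [Metric.tendsto_atTop]
    intro ε hε
    obtain ⟨N₀, hN₀⟩ := hαtail (ε/2) (by linarith)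
    refine ⟨N₀, fun N hN => ?_⟩
    rw [dist_eq_norm]
    have hle : ‖(proj ℂ N).comp A - A‖ ≤ ε/2 := by
      refine ContinuousLinearMap.opNorm_le_bound _ (by linarith) fun x => ?_
      have e1 : ((proj ℂ N).comp A - A) x = -(A x - proj ℂ N (A x)) := by
        rw [ContinuousLinearMap.sub_apply, ContinuousLinearMap.comp_apply, neg_sub]
      rw [e1, norm_neg]
      have h2 : ‖A x - proj ℂ N (A x)‖ ≤ ‖α (y x) - proj ℝ N (α (y x))‖ := by
        refine norm_le_norm_of_forall _ _ fun i => ?_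
        simp only [lp.coeFn_sub, Pi.sub_apply, proj_apply]
        split_ifs with h
        · simp
        · rw [sub_zero, sub_zero, Real.norm_eq_abs]
          exact (hMain x i).trans (le_abs_self _)
      have h3 := hN₀ N hN (y x)
      rw [hy_norm] at h3
      exact h2.trans h3
    exact lt_of_le_of_lt hle (by linarith)
  exact isCompactOperator_of_tendsto hTendA (Eventually.of_forall hTN)
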